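/- Let P be a finite set of polynomials in K[x_1,…,x_n] containing a nonzero polynomial, let M = [M_1,…,M_r] be a medial set of P with M_1 nonconstant, and let M be a nonzero polynomial that is reduced with respect to M. Then every medial set M′ of the enlarged set P ∪ {M_1,…,M_r} ∪ {M} has strictly lower ranking than M, i.e. M′ ≺ M. -/

import Mathlib

open MvPolynomial

variable {n : ℕ} {K : Type*} [Field K]

/-- Lexicographic order on monomials (exponent vectors) induced by the variable
ordering `x_1 < ⋯ < x_n`: higher-indexed variables are more significant. -/
def MonLt {n : ℕ} (a b : Fin n →₀ ℕ) : Prop :=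
  ∃ i : Fin n, a i < b i ∧ ∀ j : Fin n, i < j → a j = b j

/-- The order `P < Q` on polynomials: `P < Q` iff `lt(P) <_lex lt(Q)`, or the
heading terms agree and the tails satisfy `P - lm(P) < Q - lm(Q)` (with `0 < R`
for every nonzero `R`).  Equivalently (since only supports matter): the supports
of `P` and `Q` differ and the lex-greatest monomial in their symmetric
difference belongs to the support of `Q`. -/
def PoLt (P Q : MvPolynomial (Fin n) K) : Prop :=
  ∃ m ∈ Q.support \ P.support,
    ∀ m' ∈ (P.support \ Q.support) ∪ (Q.support \ P.support), m' ≠ m → MonLt m' m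

/-- `P ≈ Q` : neither `P < Q` nor `Q < P`. -/
def PoEq (P Q : MvPolynomial (Fin n) K) : Prop := ¬ PoLt P Q ∧ ¬ PoLt Q P

/-- The class of a polynomial: the (1-based) index of its leading variable;
`0` for (nonzero) constants. -/
noncomputable def cls (P : MvPolynomial (Fin n) K) : ℕ :=
  P.vars.sup fun i => i.1 + 1

/-- The leading degree of a polynomial: its degree in its leading variable;
`0` for constants. -/
noncomputable def ldeg (P : MvPolynomial (Fin n) K) : ℕ :=
  WithBot.recBotCoe 0 (fun i => P.degreeOf i) P.vars.max

/-- Ranking of polynomials: `P ≺ Q`. -/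
def RankLt (P Q : MvPolynomial (Fin n) K) : Prop :=
  cls P < cls Q ∨ (cls P = cls Q ∧ ldeg P < ldeg Q)

/-- `P ∼ Q` : neither `P ≺ Q` nor `Q ≺ P`. -/
def RankEq (P Q : MvPolynomial (Fin n) K) : Prop := ¬ RankLt P Q ∧ ¬ RankLt Q P

/-- `P` is reduced w.r.t. a nonconstant `Q`: `deg(P, lv(Q)) < ldeg(Q)`. -/
def ReducedWrt (P Q : MvPolynomial (Fin n) K) : Prop :=
  ∀ i : Fin n, Q.vars.max = (i : WithBot (Fin n)) → P.degreeOf i < Q.degreeOf i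

/-- A triangular set: a list of nonconstant polynomials with strictly
increasing leading variables. -/
def IsTriangular (T : List (MvPolynomial (Fin n) K)) : Prop :=
  (∀ P ∈ T, 0 < cls P) ∧ T.Chain' fun P Q => cls P < cls Q

/-- Ranking of triangular sets (as lists): `T ≺ S`. -/
def TriLt (T S : List (MvPolynomial (Fin n) K)) : Prop :=
  (∃ i, i < T.length ∧ i < S.length ∧
      (∀ j < i, RankEq (T.getD j 0) (S.getD j 0)) ∧
      RankLt (T.getD i 0) (S.getD i 0)) ∨
  (S.length < T.length ∧ ∀ j < S.length, RankEq (T.getD j 0) (S.getD j 0))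

/-- `T ∼ S` : neither `T ≺ S` nor `S ≺ T`. -/
def TriEq (T S : List (MvPolynomial (Fin n) K)) : Prop := ¬ TriLt T S ∧ ¬ TriLt S T

/-- An ascending set: either a triangular set in which every element is reduced
w.r.t. all earlier elements (non-contradictory), or a single nonzero constant
(contradictory). -/
def IsAscending (A : List (MvPolynomial (Fin n) K)) : Prop :=
  (IsTriangular A ∧ A.Pairwise fun P Q => ReducedWrt Q P) ∨
  ∃ a : K, a ≠ 0 ∧ A = [MvPolynomial.C a]

/-- A basic set of a polynomial set `S`: an ascending set contained in `S`
such that no ascending set contained in `S` has strictly lower ranking. -/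
def IsBasicSet (B : List (MvPolynomial (Fin n) K))
    (S : Set (MvPolynomial (Fin n) K)) : Prop :=
  IsAscending B ∧ (∀ b ∈ B, b ∈ S) ∧
    ∀ B' : List (MvPolynomial (Fin n) K),
      IsAscending B' → (∀ b ∈ B', b ∈ S) → ¬ TriLt B' B

/-- A medial set of a polynomial set `S`: an ascending set contained in the
ideal `⟨S⟩` whose ranking is not higher than that of any basic set of `S`. -/
def IsMedialSet (M : List (MvPolynomial (Fin n) K))
    (S : Set (MvPolynomial (Fin n) K)) : Prop :=
  IsAscending M ∧ (∀ F ∈ M, F ∈ Ideal.span S) ∧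
    ∀ B : List (MvPolynomial (Fin n) K), IsBasicSet B S → ¬ TriLt B M

/-- The leading coefficient of `P` regarded as a univariate polynomial in
`x_q`, as a polynomial in the remaining variables. -/
noncomputable def lcOf (P : MvPolynomial (Fin n) K) (q : Fin n) :
    MvPolynomial (Fin n) K :=
  ∑ m ∈ P.support.filter fun m => m q = P.degreeOf q,
    MvPolynomial.monomial (m.erase q) (P.coeff m)

/-- The initial of `P`: its leading coefficient w.r.t. its leading variable. -/
noncomputable def initOf (P : MvPolynomial (Fin n) K) : MvPolynomial (Fin n) K :=
  WithBot.recBotCoe P (fun q => lcOf P q) P.vars.max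

section WuAux

open List

variable {n : ℕ} {K : Type*} [Field K]

/-- Rank of a polynomial packaged as an element of a dual lex order, so that
lower rank ↦ larger value. -/
noncomputable def rkD (P : MvPolynomial (Fin n) K) : (Lex (ℕ × ℕ))ᵒᵈ :=
  OrderDual.toDual (toLex (cls P, ldeg P))

lemma rankLt_iff {P Q : MvPolynomial (Fin n) K} : RankLt P Q ↔ rkD Q < rkD P := by
  show _ ↔ toLex (cls P, ldeg P) < toLex (cls Q, ldeg Q)
  rw [Prod.Lex.lt_iff]
  rfl

lemma rankEq_iff {P Q : MvPolynomial (Fin n) K} : RankEq P Q ↔ rkD P = rkD Q := by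
  constructor
  · rintro ⟨h1, h2⟩
    rw [rankLt_iff] at h1 h2
    exact _root_.le_antisymm (not_lt.mp h1) (not_lt.mp h2)
  · intro h
    exact ⟨by rw [rankLt_iff, h]; exact lt_irrefl _,
           by rw [rankLt_iff, h]; exact lt_irrefl _⟩

lemma rankEq_refl (P : MvPolynomial (Fin n) K) : RankEq P P := rankEq_iff.mpr rfl

/-- The list of element ranks, in the dual order. -/
noncomputable def keyL (L : List (MvPolynomial (Fin n) K)) : List ((Lex (ℕ × ℕ))ᵒᵈ) :=
  L.map rkD

lemma not_triLt_nil (S : List (MvPolynomial (Fin n) K)) : ¬ TriLt [] S := by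
  rintro (⟨i, hi, -⟩ | ⟨h, -⟩)
  · simp at hi
  · simp at h

lemma triLt_nil (t : MvPolynomial (Fin n) K) (T : List (MvPolynomial (Fin n) K)) :
    TriLt (t :: T) [] :=
  Or.inr ⟨by simp, by simp⟩

lemma triLt_cons {t s : MvPolynomial (Fin n) K} {T S : List (MvPolynomial (Fin n) K)} :
    TriLt (t :: T) (s :: S) ↔ RankLt t s ∨ (RankEq t s ∧ TriLt T S) := by
  constructor
  · rintro (⟨i, hiT, hiS, hpre, hlt⟩ | ⟨hlen, hall⟩)
    · cases i with
      | zero => exact Or.inl (by simpa using hlt)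
      | succ i =>
        refine Or.inr ⟨by simpa using hpre 0 (Nat.succ_pos _),
          Or.inl ⟨i, by simpa using hiT, by simpa using hiS,
            fun j hj => by simpa using hpre (j + 1) (by omega),
            by simpa using hlt⟩⟩
    · refine Or.inr ⟨by simpa using hall 0 (by simp), Or.inr ⟨by simpa using hlen,
        fun j hj => by simpa using hall (j + 1) (by simpa using hj)⟩⟩
  · rintro (h | ⟨he, ⟨i, hiT, hiS, hpre, hlt⟩ | ⟨hlen, hall⟩⟩)
    · exact Or.inl ⟨0, by simp, by simp, fun j hj => absurd hj (by omega), by simpa using h⟩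
    · refine Or.inl ⟨i + 1, by simpa using hiT, by simpa using hiS, fun j hj => ?_,
        by simpa using hlt⟩
      cases j with
      | zero => simpa using he
      | succ j => simpa using hpre j (by omega)
    · refine Or.inr ⟨by simpa using hlen, fun j hj => ?_⟩
      cases j with
      | zero => simpa using he
      | succ j => simpa using hall j (by simpa using hj)

lemma lex_cons_inv {α : Type*} {r : α → α → Prop} {a b : α} {l m : List α}
    (h : List.Lex r (a :: l) (b :: m)) : r a b ∨ (a = b ∧ List.Lex r l m) := by
  match h with
  | .rel h0 => exact Or.inl h0
  | .cons h0 => exact Or.inr ⟨rfl, h0⟩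

lemma dropWhile_cons_false {α : Type*} (p : α → Bool) :
    ∀ (l : List α) (q : α) (d' : List α), l.dropWhile p = q :: d' → p q = false := by
  intro l
  induction l with
  | nil => intro q d' h; simp [List.dropWhile] at h
  | cons a l ih =>
    intro q d' h
    rw [List.dropWhile_cons] at h
    by_cases hpa : p a = true
    · rw [if_pos hpa] at h
      exact ih q d' h
    · rw [if_neg hpa] at h
      obtain ⟨rfl, -⟩ := List.cons.injEq .. ▸ h
      exact Bool.eq_false_iff.mpr hpa

lemma triLt_iff {T S : List (MvPolynomial (Fin n) K)} :
    TriLt T S ↔ keyL S < keyL T := by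
  show _ ↔ List.Lex (· < ·) (keyL S) (keyL T)
  induction T generalizing S with
  | nil =>
    simp only [keyL, List.map_nil]
    exact ⟨fun h => absurd h (not_triLt_nil S), fun h => absurd h List.not_lex_nil⟩
  | cons t T ih =>
    cases S with
    | nil =>
      simp only [keyL, List.map_nil, List.map_cons]
      exact ⟨fun _ => List.Lex.nil, fun _ => triLt_nil t T⟩
    | cons s S =>
      rw [triLt_cons]
      constructor
      · rintro (h | ⟨he, h⟩)
        · exact List.Lex.rel (rankLt_iff.mp h)
        · have : rkD t = rkD s := rankEq_iff.mp he
          show List.Lex (· < ·) (rkD s :: keyL S) (rkD t :: keyL T)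
          rw [← this]
          exact List.Lex.cons (ih.mp h)
      · intro h
        have h' : List.Lex (· < ·) (rkD s :: keyL S) (rkD t :: keyL T) := h
        rcases lex_cons_inv h' with h0 | ⟨he, h0⟩
        · exact Or.inl (rankLt_iff.mpr h0)
        · exact Or.inr ⟨rankEq_iff.mpr he.symm, ih.mpr h0⟩

lemma triLt_append {t X Y : List (MvPolynomial (Fin n) K)} (h : TriLt X Y) :
    TriLt (t ++ X) (t ++ Y) := by
  induction t with
  | nil => simpa using h
  | cons a t ih => exact triLt_cons.mpr (Or.inr ⟨rankEq_refl a, ih⟩)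

lemma cls_eq_of_max {P : MvPolynomial (Fin n) K} {i : Fin n} (h : P.vars.max = ↑i) :
    cls P = i.1 + 1 := by
  have hmem : i ∈ P.vars := Finset.mem_of_max h
  refine le_antisymm (Finset.sup_le fun j hj => ?_) (Finset.le_sup (f := fun i : Fin n => i.1 + 1) hmem)
  have hle : (j : WithBot (Fin n)) ≤ ↑i := h ▸ Finset.le_max hj
  have : j ≤ i := by exact_mod_cast hle
  exact Nat.succ_le_succ this

lemma exists_max_of_cls_pos {P : MvPolynomial (Fin n) K} (h : 0 < cls P) :
    ∃ i : Fin n, P.vars.max = ↑i := by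
  have hne : P.vars.Nonempty := by
    by_contra hne
    rw [Finset.not_nonempty_iff_eq_empty] at hne
    simp [cls, hne] at h
  obtain ⟨i, hi⟩ := Finset.max_of_nonempty hne
  exact ⟨i, hi⟩

lemma ldeg_of_max {P : MvPolynomial (Fin n) K} {i : Fin n} (h : P.vars.max = ↑i) :
    ldeg P = P.degreeOf i := by
  unfold ldeg
  rw [h]
  rfl

lemma rankLt_of_reduced {N Q : MvPolynomial (Fin n) K} (hN : 0 < cls N) (hQ : 0 < cls Q)
    (hle : cls N ≤ cls Q) (hred : ReducedWrt N Q) : RankLt N Q := by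
  rcases lt_or_eq_of_le hle with h | h
  · exact Or.inl h
  · obtain ⟨i, hi⟩ := exists_max_of_cls_pos hN
    obtain ⟨j, hj⟩ := exists_max_of_cls_pos hQ
    have hij : i = j := by
      have := cls_eq_of_max hi
      have := cls_eq_of_max hj
      apply Fin.ext
      omega
    refine Or.inr ⟨h, ?_⟩
    rw [ldeg_of_max hi, ldeg_of_max hj, hij]
    exact hred j hj

lemma eq_C_of_cls_eq_zero {N : MvPolynomial (Fin n) K} (h : cls N = 0) :
    N = MvPolynomial.C (N.coeff 0) := by
  have hv : N.vars = ∅ := by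
    rw [← Finset.not_nonempty_iff_eq_empty]
    rintro ⟨i, hi⟩
    have : i.1 + 1 ≤ cls N := Finset.le_sup (f := fun i : Fin n => i.1 + 1) hi
    omega
  ext m
  by_cases hm : m = 0
  · subst hm; simp
  · have hns : m ∉ N.support := by
      intro hs
      obtain ⟨i, hi⟩ := Finsupp.support_nonempty_iff.mpr hm
      have : i ∈ N.vars := (MvPolynomial.mem_vars i).mpr ⟨m, hs, hi⟩
      simp [hv] at this
    rw [MvPolynomial.notMem_support_iff.mp hns, MvPolynomial.coeff_C, if_neg (Ne.symm hm)]

lemma finite_lists {α : Type*} {s : Set α} (hs : s.Finite) (k : ℕ) :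
    {l : List α | (∀ x ∈ l, x ∈ s) ∧ l.length ≤ k}.Finite := by
  induction k with
  | zero =>
    refine Set.Finite.subset (Set.finite_singleton []) ?_
    rintro l ⟨-, hl⟩
    simp only [Nat.le_zero, List.length_eq_zero_iff] at hl
    simp [hl]
  | succ k ih =>
    refine Set.Finite.subset ((Set.finite_singleton ([] : List α)).union (hs.image2 List.cons ih)) ?_
    rintro l ⟨hmem, hlen⟩
    cases l with
    | nil => exact Or.inl rfl
    | cons a t =>
      refine Or.inr (Set.mem_image2.mpr ⟨a, hmem a List.mem_cons_self, t,
        ⟨fun x hx => hmem x (List.mem_cons_of_mem a hx), by simpa using hlen⟩, rfl⟩)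

lemma ascending_nodup {A : List (MvPolynomial (Fin n) K)} (h : IsAscending A) : A.Nodup := by
  rcases h with ⟨⟨-, hch⟩, -⟩ | ⟨a, -, rfl⟩
  · haveI : Trans (fun P Q : MvPolynomial (Fin n) K => cls P < cls Q)
      (fun P Q : MvPolynomial (Fin n) K => cls P < cls Q)
      (fun P Q : MvPolynomial (Fin n) K => cls P < cls Q) :=
      ⟨lt_trans⟩
    have hpw := List.isChain_iff_pairwise.mp hch
    exact hpw.imp fun {a b} hab => fun e => absurd (e ▸ hab) (lt_irrefl _)
  · simp

lemma exists_basic {S : Set (MvPolynomial (Fin n) K)} (hSfin : S.Finite)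
    (A0 : List (MvPolynomial (Fin n) K)) (hA0a : IsAscending A0) (hA0m : ∀ a ∈ A0, a ∈ S) :
    ∃ B, IsBasicSet B S ∧ ¬ TriLt A0 B := by
  classical
  set 𝒜 : Set (List (MvPolynomial (Fin n) K)) := {B | IsAscending B ∧ ∀ b ∈ B, b ∈ S} with h𝒜
  have hfin : 𝒜.Finite := by
    refine Set.Finite.subset (finite_lists hSfin (hSfin.toFinset.card + 1)) ?_
    rintro B ⟨hBa, hBm⟩
    refine ⟨hBm, ?_⟩
    have hnd : B.Nodup := ascending_nodup hBa
    have hsub : B.toFinset ⊆ hSfin.toFinset := by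
      intro x hx
      rw [Set.Finite.mem_toFinset]
      exact hBm x (List.mem_toFinset.mp hx)
    have := Finset.card_le_card hsub
    rw [List.toFinset_card_of_nodup hnd] at this
    omega
  obtain ⟨B, hB, hmax⟩ := Set.exists_max_image 𝒜 keyL hfin ⟨A0, hA0a, hA0m⟩
  refine ⟨B, ⟨hB.1, hB.2, fun B' hB'a hB'm => ?_⟩, ?_⟩
  · rw [triLt_iff]
    exact not_lt.mpr (hmax B' ⟨hB'a, hB'm⟩)
  · rw [triLt_iff]
    exact not_lt.mpr (hmax A0 ⟨hA0a, hA0m⟩)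

lemma exists_lower_asc {M : List (MvPolynomial (Fin n) K)} (hMasc : IsAscending M)
    {M₁ : MvPolynomial (Fin n) K} {Ms : List (MvPolynomial (Fin n) K)}
    (hMeq : M = M₁ :: Ms) (hM1 : 0 < cls M₁)
    {N : MvPolynomial (Fin n) K} (hN : N ≠ 0) (hNred : ∀ Q ∈ M, ReducedWrt N Q) :
    ∃ A, IsAscending A ∧ (∀ a ∈ A, a ∈ M ∨ a = N) ∧ TriLt A M := by
  classical
  have hMtri : IsTriangular M ∧ M.Pairwise fun P Q => ReducedWrt Q P := by
    rcases hMasc with h | ⟨a, ha, hMe⟩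
    · exact h
    · rw [hMeq] at hMe
      have : M₁ = MvPolynomial.C a := (List.cons.injEq _ _ _ _ ▸ hMe).1
      rw [this] at hM1
      simp [cls, MvPolynomial.vars_C] at hM1
  by_cases hc : cls N = 0
  · refine ⟨[N], Or.inr ⟨N.coeff 0, ?_, by rw [← eq_C_of_cls_eq_zero hc]⟩,
      by simp, ?_⟩
    · intro h0
      apply hN
      rw [eq_C_of_cls_eq_zero hc, h0, map_zero]
    · rw [hMeq]
      exact triLt_cons.mpr (Or.inl (Or.inl (by omega)))
  · have hcN : 0 < cls N := Nat.pos_of_ne_zero hc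
    set p : MvPolynomial (Fin n) K → Bool := fun Q => decide (cls Q < cls N) with hp
    set t := M.takeWhile p with ht
    have htp : t <+: M := List.takeWhile_prefix p
    have htsub : ∀ x ∈ t, x ∈ M := fun x hx => htp.sublist.subset hx
    have hmemP : ∀ x ∈ t, cls x < cls N := fun x hx => by
      have := List.mem_takeWhile_imp hx
      simpa [hp] using this
    refine ⟨t ++ [N], Or.inl ⟨⟨?_, ?_⟩, ?_⟩, ?_, ?_⟩
    · intro Q hQ
      rcases List.mem_append.mp hQ with h | h
      · exact hMtri.1.1 Q (htsub Q h)
      · simp only [List.mem_singleton] at h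
        exact h ▸ hcN
    · refine List.isChain_append.mpr ?_
      refine ⟨hMtri.1.2.prefix htp, List.isChain_singleton N, fun x hx y hy => ?_⟩
      have hxm : x ∈ t := List.mem_of_mem_getLast? hx
      simp only [List.head?_cons, Option.mem_some_iff] at hy
      rw [← hy]
      exact hmemP x hxm
    · rw [List.pairwise_append]
      refine ⟨hMtri.2.sublist htp.sublist, List.pairwise_singleton _ _, fun x hx y hy => ?_⟩
      simp only [List.mem_singleton] at hy
      rw [hy]
      exact hNred x (htsub x hx)
    · intro a ha
      rcases List.mem_append.mp ha with h | h
      · exact Or.inl (htsub a h)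
      · simp only [List.mem_singleton] at h
        exact Or.inr h
    · have hMdec : M = t ++ M.dropWhile p := (List.takeWhile_append_dropWhile (p := p) (l := M)).symm
      rcases hd : M.dropWhile p with _ | ⟨q, d'⟩
      · rw [hd, List.append_nil] at hMdec
        rw [hMdec]
        simpa using triLt_append (t := t) (X := [N]) (Y := []) (triLt_nil N [])
      · have hqM : q ∈ M := by rw [hMdec, hd]; simp
        have hqp : p q = false := dropWhile_cons_false p M q d' hd
        have hqcls : cls N ≤ cls q := by
          have : ¬ (cls q < cls N) := by simpa [hp] using hqp
          omega
        have hlt : RankLt N q :=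
          rankLt_of_reduced hcN (hMtri.1.1 q hqM) hqcls (hNred q hqM)
        conv_rhs => rw [hMdec, hd]
        exact triLt_append (triLt_cons.mpr (Or.inl hlt))

end WuAux
/-- if `M` is a medial set of a finite set `P` (containing a nonzero
polynomial) with nonconstant first element, and `N ≠ 0` is reduced w.r.t. `M`, then
every medial set of `P ∪ M ∪ {N}` has strictly lower ranking than `M`. -/
theorem medialSet_of_enlarged_lt
    {n : ℕ} {K : Type*} [Field K] (hn : 1 ≤ n)
    (P : Finset (MvPolynomial (Fin n) K)) (hP : ∃ p ∈ P, p ≠ 0)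
    (M : List (MvPolynomial (Fin n) K))
    (hM : IsMedialSet M (↑P : Set (MvPolynomial (Fin n) K)))
    (hM1 : ∃ (M₁ : MvPolynomial (Fin n) K) (Ms : List (MvPolynomial (Fin n) K)),
      M = M₁ :: Ms ∧ 0 < cls M₁)
    (N : MvPolynomial (Fin n) K) (hN : N ≠ 0)
    (hNred : ∀ Q ∈ M, ReducedWrt N Q) :
    ∀ M' : List (MvPolynomial (Fin n) K),
      IsMedialSet M' ((↑P : Set (MvPolynomial (Fin n) K)) ∪ {F | F ∈ M} ∪ {N}) →
      TriLt M' M := by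
  intro M' hM'
  obtain ⟨M₁, Ms, hMeq, hM1pos⟩ := hM1
  -- the enlarged set and its finiteness
  set S' : Set (MvPolynomial (Fin n) K) :=
    (↑P : Set (MvPolynomial (Fin n) K)) ∪ {F | F ∈ M} ∪ {N} with hS'
  have hS'fin : S'.Finite :=
    ((P.finite_toSet.union (M.finite_toSet)).union (Set.finite_singleton N))
  -- construct an ascending set in S' of lower rank than M
  obtain ⟨A, hAasc, hAmem, hAlt⟩ := exists_lower_asc hM.1 hMeq hM1pos hN hNred
  have hAmem' : ∀ a ∈ A, a ∈ S' := by
    intro a ha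
    rcases hAmem a ha with h | h
    · exact Or.inl (Or.inr h)
    · exact Or.inr h
  -- get a basic set of S'
  obtain ⟨B, hBbasic, hBA⟩ := exists_basic hS'fin A hAasc hAmem'
  -- rank chasing
  have h3 : ¬ TriLt B M' := hM'.2.2 B hBbasic
  rw [triLt_iff] at hBA hAlt h3 ⊢
  calc keyL M < keyL A := hAlt
    _ ≤ keyL B := not_lt.mp hBA
    _ ≤ keyL M' := not_lt.mp h3
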